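/- arXiv:math/9908146 — 2 statements merged into one kernel-verified Lean document; each statement's English description precedes it below -/
import Mathlib

section
/- For alpha + beta + 1 > 0 and every nonnegative integer n, ((1-x)/2)^n equals the sum over k from 0 to n of (-n)_k (alpha+k+1)_{n-k} (alpha+beta+2k+1) / (alpha+beta+k+1)_{n+1} times P_k^{(alpha,beta)}(x). -/
noncomputable def poch (a : ℝ) (k : ℕ) : ℝ := ∏ m ∈ Finset.range k, (a + m)

noncomputable def lag (α : ℝ) (n : ℕ) (x : ℝ) : ℝ :=
  ∑ k ∈ Finset.range (n + 1),
    (-1) ^ k * (poch (α + k + 1) (n - k) / (n - k).factorial) * x ^ k / k.factorial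

noncomputable def jacobi (α β : ℝ) (n : ℕ) (x : ℝ) : ℝ :=
  ∑ k ∈ Finset.range (n + 1),
    poch ((n : ℝ) + α + β + 1) k * poch (α + k + 1) (n - k) /
      (k.factorial * (n - k).factorial) * ((x - 1) / 2) ^ k

noncomputable def charlier (a : ℝ) (n : ℕ) (x : ℝ) : ℝ :=
  ∑ m ∈ Finset.range (n + 1),
    (∏ j ∈ Finset.range m, (x - (j : ℝ))) / m.factorial * (-a) ^ (n - m) / (n - m).factorial
lemma poch_add (a : ℝ) (i j : ℕ) : poch a (i + j) = poch a i * poch (a + i) j := by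
  unfold poch
  rw [Finset.prod_range_add]
  congr 1
  apply Finset.prod_congr rfl
  intro m _
  push_cast
  ring

lemma poch_succ (a : ℝ) (k : ℕ) : poch a (k + 1) = poch a k * (a + k) := by
  unfold poch; rw [Finset.prod_range_succ]

lemma poch_succ' (a : ℝ) (k : ℕ) : poch a (k + 1) = a * poch (a + 1) k := by
  have h := poch_add a 1 k
  rw [add_comm 1 k] at h
  simpa [poch, Finset.prod_range_one] using h

lemma poch_pos {a : ℝ} (ha : 0 < a) (k : ℕ) : 0 < poch a k := by
  unfold poch
  apply Finset.prod_pos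
  intro m _
  positivity

lemma poch_neg_nat (n : ℕ) : ∀ k ≤ n, poch (-(n : ℝ)) k = (-1) ^ k * n.factorial / (n - k).factorial := by
  intro k
  induction k with
  | zero =>
    intro _
    have : ((n.factorial : ℝ)) ≠ 0 := by positivity
    simp [poch, div_self this]
  | succ k ih =>
    intro hk
    have hk' : k ≤ n := by omega
    have hcast : ((n - k : ℕ) : ℝ) = (n : ℝ) - k := by
      push_cast [Nat.cast_sub hk']; ring
    have key : ((n - k).factorial : ℝ) = ((n:ℝ) - k) * ((n - (k+1)).factorial : ℝ) := by
      have h1 : n - k = (n - (k + 1)) + 1 := by omega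
      rw [h1, Nat.factorial_succ]
      have : (((n - (k+1) : ℕ) : ℝ) + 1) = (n:ℝ) - k := by
        push_cast [Nat.cast_sub hk]; ring
      push_cast
      rw [this]
    rw [poch_succ, ih hk', key]
    have hne : ((n:ℝ) - k) ≠ 0 := by
      have : (k:ℝ) < n := by exact_mod_cast hk
      linarith
    have hfe : ((n - (k+1)).factorial : ℝ) ≠ 0 := by positivity
    field_simp
    ring

lemma poch_base (a a' : ℝ) (k : ℕ) (h : a = a') : poch a k = poch a' k := by rw [h]

lemma mid (b : ℝ) (hb : 0 < b + 1) (i r : ℕ) :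
    (-1:ℝ)^(i+1) * (b + 2*((i:ℝ)+1) + 1) /
        ((i+1).factorial * (r+1).factorial * poch (b+((i:ℝ)+1)+1) (i+1+(r+1)+1))
    = (-1:ℝ)^(i+1) / (((i:ℝ)+1+((r:ℝ)+1)) * i.factorial * (r+1).factorial * poch (b+((i:ℝ)+1)+1) (i+1+(r+1)))
      - (-1:ℝ)^(i+2) / (((i:ℝ)+1+((r:ℝ)+1)) * (i+1).factorial * r.factorial * poch (b+((i:ℝ)+2)+1) (i+1+(r+1))) := by
  set Q : ℝ := poch (b+(i:ℝ)+3) (i+r+1) with hQ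
  have hQpos : 0 < Q := poch_pos (by linarith [Nat.cast_nonneg (α := ℝ) i]) _
  have e1 : poch (b+((i:ℝ)+1)+1) (i+1+(r+1)+1) = (b+(i:ℝ)+2) * (Q * (b+2*(i:ℝ)+(r:ℝ)+4)) := by
    rw [show i+1+(r+1)+1 = (i+r+1)+1+1 by omega, poch_succ', poch_succ, hQ]
    rw [poch_base (b+((i:ℝ)+1)+1+1) (b+(i:ℝ)+3) _ (by ring)]
    push_cast; ring
  have e2 : poch (b+((i:ℝ)+1)+1) (i+1+(r+1)) = (b+(i:ℝ)+2) * Q := by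
    rw [show i+1+(r+1) = (i+r+1)+1 by omega, poch_succ', hQ]
    rw [poch_base (b+((i:ℝ)+1)+1+1) (b+(i:ℝ)+3) _ (by ring)]
    ring
  have e3 : poch (b+((i:ℝ)+2)+1) (i+1+(r+1)) = Q * (b+2*(i:ℝ)+(r:ℝ)+4) := by
    rw [show i+1+(r+1) = (i+r+1)+1 by omega, poch_succ, hQ]
    rw [poch_base (b+((i:ℝ)+2)+1) (b+(i:ℝ)+3) _ (by ring)]
    push_cast; ring
  rw [e1, e2, e3]
  have n1 : (b+(i:ℝ)+2) ≠ 0 := by linarith [Nat.cast_nonneg (α := ℝ) i]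
  have n2 : (b+2*(i:ℝ)+(r:ℝ)+4) ≠ 0 := by
    linarith [Nat.cast_nonneg (α := ℝ) i, Nat.cast_nonneg (α := ℝ) r]
  have n3 : Q ≠ 0 := ne_of_gt hQpos
  have n4 : (i.factorial : ℝ) ≠ 0 := by positivity
  have n5 : (r.factorial : ℝ) ≠ 0 := by positivity
  have n6 : ((i:ℝ)+1+((r:ℝ)+1)) ≠ 0 := by
    linarith [Nat.cast_nonneg (α := ℝ) i, Nat.cast_nonneg (α := ℝ) r]
  push_cast [Nat.factorial_succ]
  field_simp
  ring

lemma core_tel (b : ℝ) (hb : 0 < b + 1) (m : ℕ) (hm : 1 ≤ m) :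
    ∑ i ∈ Finset.range (m + 1),
      (-1 : ℝ) ^ i * (b + 2 * i + 1) /
        (i.factorial * (m - i).factorial * poch (b + i + 1) (m + 1)) = 0 := by
  set V : ℕ → ℝ := fun i =>
    if 1 ≤ i ∧ i ≤ m then
      (-1) ^ i / (m * (i - 1).factorial * (m - i).factorial * poch (b + i + 1) m)
    else 0 with hV
  have key : ∀ i ∈ Finset.range (m + 1),
      (-1 : ℝ) ^ i * (b + 2 * i + 1) /
        (i.factorial * (m - i).factorial * poch (b + i + 1) (m + 1)) = V i - V (i + 1) := by
    intro i hi
    rw [Finset.mem_range] at hi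
    rcases Nat.eq_zero_or_pos i with rfl | hi1
    · -- i = 0
      have hV0 : V 0 = 0 := by simp [hV]
      have hV1 : V 1 = (-1) / (m * (0).factorial * (m - 1).factorial * poch (b + 1 + 1) m) := by
      
        simp only [hV]
        rw [if_pos ⟨le_refl 1, hm⟩]
        norm_num
      rw [hV0, hV1]
      obtain ⟨m', rfl⟩ : ∃ m', m = m' + 1 := ⟨m - 1, by omega⟩
      simp only [Nat.sub_zero, Nat.add_sub_cancel, Nat.cast_zero, Nat.factorial_zero,
        Nat.cast_one, pow_zero, add_zero, mul_zero]
      have e1 : poch (b + 1) (m' + 1 + 1) = (b + 1) * poch (b + 1 + 1) (m' + 1) := by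
        rw [poch_succ']
      rw [e1]
      have hP : 0 < poch (b + 1 + 1) (m' + 1) := poch_pos (by linarith) _
      have n1 : (b + 1) ≠ 0 := ne_of_gt hb
      have n2 : (m'.factorial : ℝ) ≠ 0 := by positivity
      have n3 : ((m' : ℝ) + 1) ≠ 0 := by positivity
      push_cast [Nat.factorial_succ]
      field_simp
      ring
    · rcases Nat.lt_or_ge i m with him | him
      · -- middle
        obtain ⟨i', rfl⟩ : ∃ i', i = i' + 1 := ⟨i - 1, by omega⟩
        obtain ⟨r, rfl⟩ : ∃ r, m = i' + 1 + (r + 1) := ⟨m - i' - 2, by omega⟩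
        have hVi : V (i' + 1) = (-1) ^ (i'+1) /
            ((↑(i' + 1 + (r + 1)) : ℝ) * i'.factorial * (r+1).factorial *
              poch (b + (↑(i'+1) : ℝ) + 1) (i' + 1 + (r + 1))) := by
          simp only [hV]
          rw [if_pos ⟨by omega, by omega⟩, Nat.add_sub_cancel, Nat.add_sub_cancel_left]
        have d1 : i' + 1 + 1 - 1 = i' + 1 := by omega
        have d2 : i' + 1 + (r + 1) - (i' + 1 + 1) = r := by omega
        have hVsi : V (i' + 1 + 1) = (-1) ^ (i'+2) /
            ((↑(i' + 1 + (r + 1)) : ℝ) * (i'+1).factorial * r.factorial *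
              poch (b + (↑(i'+1+1) : ℝ) + 1) (i' + 1 + (r + 1))) := by
          simp only [hV]
          rw [if_pos ⟨by omega, by omega⟩, d1, d2]
        rw [hVi, hVsi, Nat.add_sub_cancel_left]
        push_cast
        rw [show ((i':ℝ)+1+1) = ((i':ℝ)+2) by ring]
        exact mid b hb i' r
      · -- i = m
        have him' : i = m := by omega
        subst him'
        obtain ⟨i', rfl⟩ : ∃ i', i = i' + 1 := ⟨i - 1, by omega⟩
        have hVi : V (i' + 1) = (-1) ^ (i'+1) /
            ((↑(i' + 1) : ℝ) * i'.factorial * (0).factorial *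
              poch (b + (↑(i'+1) : ℝ) + 1) (i' + 1)) := by
          simp only [hV]
          rw [if_pos ⟨by omega, le_refl _⟩, Nat.add_sub_cancel, Nat.sub_self]
        have hVsi : V (i' + 1 + 1) = 0 := by
          simp only [hV]
          rw [if_neg (by omega)]
        rw [hVi, hVsi, sub_zero, Nat.sub_self]
        push_cast [Nat.factorial_succ]
        have e1 : poch (b + ((i':ℝ)+1) + 1) (i' + 1 + 1)
            = poch (b + ((i':ℝ)+1) + 1) (i' + 1) * (b + ((i':ℝ)+1) + 1 + ((i':ℝ)+1)) := by
          rw [poch_succ]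
          push_cast
          ring_nf
        rw [e1]
        have hP : 0 < poch (b + ((i':ℝ)+1) + 1) (i' + 1) := by
          apply poch_pos
          linarith [Nat.cast_nonneg (α := ℝ) i']
        have n1 : (b + ((i':ℝ)+1) + 1 + ((i':ℝ)+1)) ≠ 0 := by
          have : (0:ℝ) ≤ (i':ℝ) := Nat.cast_nonneg i'
          intro hc; nlinarith
        have n2 : (i'.factorial : ℝ) ≠ 0 := by positivity
        have n3 : ((i' : ℝ) + 1) ≠ 0 := by positivity
        field_simp
        ring
  rw [Finset.sum_congr rfl key, Finset.sum_range_sub']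
  have h0 : V 0 = 0 := by simp [hV]
  have hm1 : V (m + 1) = 0 := by
    simp only [hV]
    rw [if_neg (by omega)]
  rw [h0, hm1, sub_zero]

lemma core_val (b : ℝ) (hb : 0 < b + 1) (m : ℕ) :
    ∑ i ∈ Finset.range (m + 1),
      (-1 : ℝ) ^ i * (b + 2 * i + 1) /
        (i.factorial * (m - i).factorial * poch (b + i + 1) (m + 1)) =
      if m = 0 then 1 else 0 := by
  rcases Nat.eq_zero_or_pos m with rfl | hm
  · simp only [if_pos rfl]
    rw [Finset.sum_range_one]
    have h1 : poch (b + 0 + 1) (0 + 1) = b + 1 := by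
      simp [poch, Finset.prod_range_one]
    norm_num
    have h2 : poch (b + 1) 1 = b + 1 := by simp [poch]
    rw [h2]
    field_simp
  · rw [if_neg (by omega), core_tel b hb m hm]

lemma term_eq (α β y : ℝ) (h : α + β + 1 > 0) (j i m : ℕ) (hi : i ≤ m) :
    poch (-((j + m : ℕ) : ℝ)) (j + i) * poch (α + ((j + i : ℕ) : ℝ) + 1) ((j + m) - (j + i)) *
        (α + β + 2 * ((j + i : ℕ) : ℝ) + 1) / poch (α + β + ((j + i : ℕ) : ℝ) + 1) ((j + m) + 1) *
      (poch (((j + i : ℕ) : ℝ) + α + β + 1) j * poch (α + (j : ℝ) + 1) ((j + i) - j) /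
        ((j.factorial : ℝ) * (((j + i) - j).factorial : ℝ)) * y ^ j)
    = ((-1 : ℝ) ^ j * ((j + m).factorial / j.factorial) * poch (α + (j : ℝ) + 1) m * y ^ j) *
        ((-1 : ℝ) ^ i * ((α + β + 2 * j) + 2 * i + 1) /
          (i.factorial * ((m - i).factorial) * poch ((α + β + 2 * (j : ℝ)) + i + 1) (m + 1))) := by
  obtain ⟨r, rfl⟩ : ∃ r, m = i + r := ⟨m - i, by omega⟩
  have d1 : (j + i) - j = i := by omega
  have d2 : (j + (i + r)) - (j + i) = r := by omega
  have d3 : (i + r) - i = r := by omega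
  rw [d1, d2, d3]
  -- A: poch(-n, j+i)
  have hA := poch_neg_nat (j + (i + r)) (j + i) (by omega)
  have d4 : (j + (i + r)) - (j + i) = r := by omega
  rw [d4] at hA
  rw [hA]
  -- E2: split poch (α+j+1) (i+r)
  have hE2 : poch (α + (j : ℝ) + 1) (i + r)
      = poch (α + (j : ℝ) + 1) i * poch (α + ((j + i : ℕ) : ℝ) + 1) r := by
    rw [poch_add, poch_base (α + (j:ℝ) + 1 + (i:ℕ)) (α + ((j + i : ℕ):ℝ) + 1) _ (by push_cast; ring)]
  -- E1: split poch (α+β+(j+i)+1) (n+1)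
  have hE1 : poch (α + β + ((j + i : ℕ) : ℝ) + 1) ((j + (i + r)) + 1)
      = poch (α + β + ((j + i : ℕ) : ℝ) + 1) j *
          poch ((α + β + 2 * (j : ℝ)) + i + 1) ((i + r) + 1) := by
    rw [show (j + (i + r)) + 1 = j + ((i + r) + 1) by omega, poch_add,
      poch_base (α + β + ((j + i : ℕ):ℝ) + 1 + (j:ℕ)) ((α + β + 2*(j:ℝ)) + i + 1) _
        (by push_cast; ring)]
  rw [hE1, hE2,
    poch_base (((j + i : ℕ) : ℝ) + α + β + 1) (α + β + ((j + i : ℕ) : ℝ) + 1) _ (by ring)]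
  -- positivity facts
  have hjr : (0:ℝ) ≤ (j:ℝ) := Nat.cast_nonneg j
  have hir : (0:ℝ) ≤ (i:ℝ) := Nat.cast_nonneg i
  have hP1 : 0 < poch (α + β + ((j + i : ℕ) : ℝ) + 1) j := by
    apply poch_pos
    push_cast
    linarith
  have hP2 : 0 < poch ((α + β + 2 * (j : ℝ)) + i + 1) ((i + r) + 1) := by
    apply poch_pos
    linarith
  have hP3 : 0 < poch (α + (j:ℝ) + 1) i ∨ True := Or.inr trivial
  have n1 : (j.factorial : ℝ) ≠ 0 := by positivity
  have n2 : (i.factorial : ℝ) ≠ 0 := by positivity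
  have n3 : (r.factorial : ℝ) ≠ 0 := by positivity
  have n4 : poch (α + β + ((j + i : ℕ) : ℝ) + 1) j ≠ 0 := ne_of_gt hP1
  have n5 : poch ((α + β + 2 * (j : ℝ)) + i + 1) ((i + r) + 1) ≠ 0 := ne_of_gt hP2
  push_cast at n4 n5 ⊢
  field_simp [n1, n2, n3, n4, n5]
  ring

theorem stmt4 (α β x : ℝ) (h : α + β + 1 > 0) (n : ℕ) :
    ((1 - x) / 2) ^ n =
      ∑ k ∈ Finset.range (n + 1),
        poch (-(n : ℝ)) k * poch (α + k + 1) (n - k) * (α + β + 2 * k + 1) /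
          poch (α + β + k + 1) (n + 1) * jacobi α β k x := by
  set y : ℝ := (x - 1) / 2 with hy
  set G : ℕ → ℕ → ℝ := fun k j =>
    poch (-(n : ℝ)) k * poch (α + k + 1) (n - k) * (α + β + 2 * k + 1) /
      poch (α + β + k + 1) (n + 1) *
      (poch ((k : ℝ) + α + β + 1) j * poch (α + (j : ℝ) + 1) (k - j) /
        ((j.factorial : ℝ) * ((k - j).factorial : ℝ)) * y ^ j) with hG
  have expand : ∀ k ∈ Finset.range (n + 1),
      poch (-(n : ℝ)) k * poch (α + k + 1) (n - k) * (α + β + 2 * k + 1) /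
        poch (α + β + k + 1) (n + 1) * jacobi α β k x
      = ∑ j ∈ Finset.range (k + 1), G k j := by
    intro k _
    rw [jacobi, Finset.mul_sum]
  rw [Finset.sum_congr rfl expand]
  have swap := Finset.sum_Ico_Ico_comm 0 (n + 1) (fun j k => G k j)
  simp only [Finset.range_eq_Ico]
  rw [← swap]
  have inner : ∀ j ∈ Finset.Ico 0 (n + 1), ∑ k ∈ Finset.Ico j (n + 1), G k j
      = if j = n then (-1 : ℝ) ^ n * y ^ n else 0 := by
    intro j hj
    rw [Finset.mem_Ico] at hj
    have hjn : j ≤ n := by omega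
    obtain ⟨m, rfl⟩ : ∃ m, n = j + m := ⟨n - j, by omega⟩
    rw [Finset.sum_Ico_eq_sum_range]
    have hrange : j + m + 1 - j = m + 1 := by omega
    rw [hrange]
    have hterm : ∀ i ∈ Finset.range (m + 1), G (j + i) j
        = ((-1 : ℝ) ^ j * (((j + m).factorial : ℝ) / (j.factorial : ℝ)) *
            poch (α + (j : ℝ) + 1) m * y ^ j) *
          ((-1 : ℝ) ^ i * ((α + β + 2 * j) + 2 * i + 1) /
            ((i.factorial : ℝ) * ((m - i).factorial : ℝ) *
              poch ((α + β + 2 * (j : ℝ)) + i + 1) (m + 1))) := by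
      intro i hi
      rw [Finset.mem_range] at hi
      have := term_eq α β y h j i m (by omega)
      simp only [hG]
      push_cast at this ⊢
      convert this using 2
    rw [Finset.sum_congr rfl hterm, ← Finset.mul_sum]
    have hb1 : 0 < (α + β + 2 * (j : ℝ)) + 1 := by
      have : (0:ℝ) ≤ (j:ℝ) := Nat.cast_nonneg j
      linarith
    rw [core_val (α + β + 2 * (j : ℝ)) hb1 m]
    rcases Nat.eq_zero_or_pos m with rfl | hm
    · rw [if_pos rfl, if_pos (by omega), mul_one]
      have h0 : poch (α + (j : ℝ) + 1) 0 = 1 := by simp [poch]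
      have hf : ((j + 0).factorial : ℝ) / (j.factorial : ℝ) = 1 := by
        have : (j.factorial : ℝ) ≠ 0 := by positivity
        simp [this]
      rw [h0, hf]
      norm_num
    · rw [if_neg (by omega), if_neg (by omega), mul_zero]
  rw [Finset.sum_congr rfl inner]
  rw [Finset.sum_ite_eq' (Finset.Ico 0 (n + 1)) n (fun _ => (-1 : ℝ) ^ n * y ^ n)]
  rw [if_pos (by simp)]
  have : (1 - x) / 2 = -y := by rw [hy]; ring
  rw [this]
  rw [neg_pow]
end

section
/- (Laguerre convolution formula) For every nonnegative integer n and arbitrary parameters alpha, beta, the sum over k from 0 to n of L_k^{(alpha)}(x) L_{n-k}^{(beta)}(y) equals L_n^{(alpha+beta+1)}(x+y). -/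
lemma poch_succ_right (a : ℝ) (k : ℕ) : poch a (k+1) = poch a k * (a + k) := by
  simp [poch, Finset.prod_range_succ]

lemma poch_succ_left (a : ℝ) (k : ℕ) : poch a (k+1) = a * poch (a+1) k := by
  rw [poch, Finset.prod_range_succ']
  simp only [Nat.cast_zero, add_zero]
  rw [mul_comm]
  congr 1
  refine Finset.prod_congr rfl fun m _ => ?_
  push_cast; ring

-- (m+1) * c a (m+1) = (a+1) * c (a+1) m  where c a m = poch (a+1) m / m!
lemma c_succ (a : ℝ) (m : ℕ) :
    ((m:ℝ)+1) * (poch (a+1) (m+1) / (m+1).factorial) = (a+1) * (poch (a+2) m / m.factorial) := by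
  rw [poch_succ_left]
  have h1 : ((m+1).factorial : ℝ) = (m+1) * m.factorial := by
    rw [Nat.factorial_succ]; push_cast; ring
  rw [h1]
  have : (a + 1 + 1) = a + 2 := by ring
  rw [this]
  field_simp

lemma vander (N : ℕ) : ∀ p q : ℝ,
    ∑ a ∈ Finset.range (N+1),
      (poch (p+1) a / a.factorial) * (poch (q+1) (N-a) / (N-a).factorial)
      = poch (p+q+2) N / N.factorial := by
  induction N with
  | zero => intro p q; simp [poch]
  | succ N ih =>
    intro p q
    have hN : ((N:ℝ)+1) ≠ 0 := by positivity
    have key : ((N:ℝ)+1) * ∑ a ∈ Finset.range (N+2),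
        (poch (p+1) a / a.factorial) * (poch (q+1) (N+1-a) / (N+1-a).factorial)
        = (p+1) * (poch ((p+1)+q+2) N / N.factorial) + (q+1) * (poch (p+(q+1)+2) N / N.factorial) := by
      rw [Finset.mul_sum]
      have split : ∀ a ∈ Finset.range (N+2),
          ((N:ℝ)+1) * ((poch (p+1) a / a.factorial) * (poch (q+1) (N+1-a) / (N+1-a).factorial))
          = (a:ℝ) * (poch (p+1) a / a.factorial) * (poch (q+1) (N+1-a) / (N+1-a).factorial)
            + (poch (p+1) a / a.factorial) * (((N+1-a : ℕ):ℝ) * (poch (q+1) (N+1-a) / (N+1-a).factorial)) := by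
        intro a ha
        have h : a ≤ N+1 := by simpa [Nat.lt_succ_iff] using ha
        have : ((N+1-a : ℕ):ℝ) = (N:ℝ) + 1 - a := by
          push_cast [Nat.cast_sub h]; ring
        rw [this]; ring
      rw [Finset.sum_congr rfl split, Finset.sum_add_distrib]
      congr 1
      · -- first sum: a * c p a -> (p+1) c (p+1) (a-1)
        rw [Finset.sum_range_succ']
        simp only [Nat.cast_zero, zero_mul, zero_mul, add_zero]
        have step : ∀ a ∈ Finset.range (N+1),
            ((a:ℕ):ℝ) * (poch (p+1) (a+1) / (a+1).factorial) * (poch (q+1) (N-a) / (N-a).factorial)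
              + (poch (p+1) (a+1) / (a+1).factorial) * (poch (q+1) (N-a) / (N-a).factorial)
            = (p+1) * ((poch (p+2) a / a.factorial) * (poch (q+1) (N-a) / (N-a).factorial)) := by
          intro a ha
          have h := c_succ p a
          calc ((a:ℕ):ℝ) * (poch (p+1) (a+1) / (a+1).factorial) * (poch (q+1) (N-a) / (N-a).factorial)
              + (poch (p+1) (a+1) / (a+1).factorial) * (poch (q+1) (N-a) / (N-a).factorial)
              = (((a:ℝ)+1) * (poch (p+1) (a+1) / (a+1).factorial)) * (poch (q+1) (N-a) / (N-a).factorial) := by ring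
            _ = ((p+1) * (poch (p+2) a / a.factorial)) * (poch (q+1) (N-a) / (N-a).factorial) := by rw [h]
            _ = _ := by ring
        have hsimp : ∀ a : ℕ, a ∈ Finset.range (N+1) →
            ((a+1:ℕ):ℝ) * (poch (p+1) (a+1) / (a+1).factorial) * (poch (q+1) (N+1-(a+1)) / (N+1-(a+1)).factorial)
            = (p+1) * ((poch (p+2) a / a.factorial) * (poch (q+1) (N-a) / (N-a).factorial)) := by
          intro a ha
          have hn : N+1-(a+1) = N-a := by omega
          rw [hn]
          push_cast
          rw [← step a ha]
          ring
        rw [Finset.sum_congr rfl hsimp, ← Finset.mul_sum]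
        have h2 : p + 2 = (p+1) + 1 := by ring
        rw [h2, ih (p+1) q]
      · -- second sum
        rw [Finset.sum_range_succ]
        simp only [Nat.sub_self, Nat.cast_zero, zero_mul, mul_zero, add_zero]
        have : ∀ a ∈ Finset.range (N+1),
            (poch (p+1) a / a.factorial) * (((N+1-a : ℕ):ℝ) * (poch (q+1) (N+1-a) / (N+1-a).factorial))
            = (q+1) * ((poch (p+1) a / a.factorial) * (poch (q+2) (N-a) / (N-a).factorial)) := by
          intro a ha
          have h : a ≤ N := by simpa [Nat.lt_succ_iff] using ha
          have h1 : N+1-a = (N-a)+1 := by omega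
          rw [h1]
          have h2 : (((N-a)+1 : ℕ):ℝ) = ((N-a:ℕ):ℝ) + 1 := by push_cast; ring
          rw [h2, c_succ]
          ring
        rw [Finset.sum_congr rfl this, ← Finset.mul_sum]
        have h2 : q + 2 = (q+1) + 1 := by ring
        rw [h2, ih p (q+1)]
    have goal2 : ((N:ℝ)+1) * (poch (p+q+2) (N+1) / (N+1).factorial)
        = (p+1) * (poch ((p+1)+q+2) N / N.factorial) + (q+1) * (poch (p+(q+1)+2) N / N.factorial) := by
      have e1 : (p+1)+q+2 = (p+q+2)+1 := by ring
      have e2 : p+(q+1)+2 = (p+q+2)+1 := by ring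
      rw [e1, e2, ← add_mul]
      have hl : poch (p+q+2) (N+1) = (p+q+2) * poch ((p+q+2)+1) N := poch_succ_left _ _
      rw [hl]
      have hf : ((N+1).factorial : ℝ) = ((N:ℝ)+1) * N.factorial := by
        rw [Nat.factorial_succ]; push_cast; ring
      rw [hf]
      have hfn : (N.factorial : ℝ) ≠ 0 := by positivity
      field_simp
      ring
    have := key.trans goal2.symm
    exact mul_left_cancel₀ hN this



lemma pad (M N : ℕ) (h : M ≤ N) (f : ℕ → ℝ) :
    ∑ i ∈ Finset.range N, (if i < M then f i else 0) = ∑ i ∈ Finset.range M, f i := by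
  rw [← Finset.sum_filter]
  congr 1
  ext k
  simp only [Finset.mem_filter, Finset.mem_range]
  omega

lemma innerSum17 (n i j : ℕ) (p q : ℝ) :
    ∑ k ∈ Finset.range (n+1),
      (if i ≤ k ∧ j + k ≤ n then
        (poch (p+1) (k-i) / (k-i).factorial) * (poch (q+1) (n-k-j) / (n-k-j).factorial) else 0)
    = if i + j ≤ n then poch (p+q+2) (n-i-j) / (n-i-j).factorial else 0 := by
  by_cases h : i + j ≤ n
  · rw [if_pos h, ← Finset.sum_filter]
    have hf : (Finset.range (n+1)).filter (fun k => i ≤ k ∧ j + k ≤ n) = Finset.Ico i (n-j+1) := by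
      ext k
      simp only [Finset.mem_filter, Finset.mem_range, Finset.mem_Ico]
      omega
    rw [hf, Finset.sum_Ico_eq_sum_range]
    have hc : n - j + 1 - i = (n - i - j) + 1 := by omega
    rw [hc]
    have step : ∀ a ∈ Finset.range ((n-i-j)+1),
        poch (p+1) ((i+a)-i) / ((i+a)-i).factorial * (poch (q+1) (n-(i+a)-j) / (n-(i+a)-j).factorial)
        = poch (p+1) a / a.factorial * (poch (q+1) ((n-i-j)-a) / ((n-i-j)-a).factorial) := by
      intro a ha
      have h1 : (i+a)-i = a := by omega
      have h2 : n-(i+a)-j = (n-i-j)-a := by omega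
      rw [h1, h2]
    rw [Finset.sum_congr rfl step, vander (n-i-j) p q]
  · rw [if_neg h]
    apply Finset.sum_eq_zero
    intro k hk
    rw [if_neg]
    omega

theorem stmt17 (α β x y : ℝ) (n : ℕ) :
    ∑ k ∈ Finset.range (n + 1), lag α k x * lag β (n - k) y =
      lag (α + β + 1) n (x + y) := by
  -- the common middle form
  have middle : ∀ (G : ℕ → ℕ → ℝ), True := fun _ => trivial
  -- LHS transformation
  have lhs_eq : ∑ k ∈ Finset.range (n + 1), lag α k x * lag β (n - k) y
      = ∑ i ∈ Finset.range (n+1), ∑ j ∈ Finset.range (n+1),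
          (if i + j ≤ n then
            ((-1)^i * x^i / i.factorial) * ((-1)^j * y^j / j.factorial) *
              (poch ((α+i) + (β+j) + 2) (n-i-j) / (n-i-j).factorial)
          else 0) := by
    simp only [lag]
    -- pad inner sums
    have step1 : ∀ k ∈ Finset.range (n+1),
        (∑ i ∈ Finset.range (k + 1),
            (-1) ^ i * (poch (α + i + 1) (k - i) / (k - i).factorial) * x ^ i / i.factorial) *
        (∑ j ∈ Finset.range (n - k + 1),
            (-1) ^ j * (poch (β + j + 1) (n - k - j) / (n - k - j).factorial) * y ^ j / j.factorial)
        = ∑ i ∈ Finset.range (n+1), ∑ j ∈ Finset.range (n+1),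
            (if i ≤ k ∧ j + k ≤ n then
              ((-1)^i * x^i / i.factorial) * ((-1)^j * y^j / j.factorial) *
                ((poch (α + i + 1) (k - i) / (k - i).factorial) *
                 (poch (β + j + 1) (n - k - j) / (n - k - j).factorial))
            else 0) := by
      intro k hk
      have hk' : k ≤ n := by simpa [Nat.lt_succ_iff] using hk
      rw [← pad (k+1) (n+1) (by omega), ← pad (n-k+1) (n+1) (by omega), Finset.sum_mul_sum]
      refine Finset.sum_congr rfl fun i _ => Finset.sum_congr rfl fun j _ => ?_
      by_cases h1 : i ≤ k ∧ j + k ≤ n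
      · rw [if_pos (by omega : i < k+1), if_pos (by omega : j < n-k+1), if_pos h1]
        ring
      · rcases Decidable.not_and_iff_or_not.mp h1 with h2 | h2
        · rw [if_neg (by omega : ¬ i < k+1), zero_mul, if_neg h1]
        · rw [if_neg (by omega : ¬ j < n-k+1), mul_zero, if_neg h1]
    rw [Finset.sum_congr rfl step1]
    rw [Finset.sum_comm]
    refine Finset.sum_congr rfl fun i _ => ?_
    rw [Finset.sum_comm]
    refine Finset.sum_congr rfl fun j _ => ?_
    have factor : ∀ k ∈ Finset.range (n+1),
        (if i ≤ k ∧ j + k ≤ n then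
          ((-1)^i * x^i / i.factorial) * ((-1)^j * y^j / j.factorial) *
            ((poch (α + i + 1) (k - i) / (k - i).factorial) *
             (poch (β + j + 1) (n - k - j) / (n - k - j).factorial))
        else 0)
        = ((-1)^i * x^i / i.factorial) * ((-1)^j * y^j / j.factorial) *
          (if i ≤ k ∧ j + k ≤ n then
            (poch ((α+i) + 1) (k - i) / (k - i).factorial) *
             (poch ((β+j) + 1) (n - k - j) / (n - k - j).factorial)
          else 0) := by
      intro k _
      have e1 : α + (i:ℝ) + 1 = (α+i) + 1 := by ring
      have e2 : β + (j:ℝ) + 1 = (β+j) + 1 := by ring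
      rw [e1, e2]
      split_ifs <;> ring
    rw [Finset.sum_congr rfl factor, ← Finset.mul_sum, innerSum17 n i j (α+i) (β+j)]
    rw [mul_ite, mul_zero]
  rw [lhs_eq]
  -- RHS transformation
  simp only [lag]
  have rhs_eq : ∀ m ∈ Finset.range (n+1),
      (-1:ℝ) ^ m * (poch (α + β + 1 + m + 1) (n - m) / (n - m).factorial) * (x + y) ^ m / m.factorial
      = ∑ i ∈ Finset.range (n+1),
          (if i < m + 1 then
            (-1:ℝ) ^ m * (poch (α + β + 1 + m + 1) (n - m) / (n - m).factorial) *
              (x^i * y^(m-i) * (m.choose i)) / m.factorial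
          else 0) := by
    intro m hm
    have hm' : m ≤ n := by simpa [Nat.lt_succ_iff] using hm
    rw [pad (m+1) (n+1) (by omega), add_pow, Finset.mul_sum, Finset.sum_div]
  rw [Finset.sum_congr rfl rhs_eq]
  conv_rhs => rw [Finset.sum_comm]
  refine Finset.sum_congr rfl fun i hi => ?_
  have hi' : i ≤ n := by simpa [Nat.lt_succ_iff] using hi
  -- LHS(i): sum over j with indicator i+j ≤ n; RHS(i): sum over m with indicator i ≤ m
  have l1 : ∑ j ∈ Finset.range (n+1),
      (if i + j ≤ n then
        ((-1:ℝ)^i * x^i / i.factorial) * ((-1)^j * y^j / j.factorial) *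
          (poch ((α+i) + (β+j) + 2) (n-i-j) / (n-i-j).factorial)
      else 0)
      = ∑ j ∈ Finset.range (n-i+1),
        ((-1:ℝ)^i * x^i / i.factorial) * ((-1)^j * y^j / j.factorial) *
          (poch ((α+i) + (β+j) + 2) (n-i-j) / (n-i-j).factorial) := by
    rw [← pad (n-i+1) (n+1) (by omega)]
    refine Finset.sum_congr rfl fun j _ => ?_
    congr 1
    simp only [eq_iff_iff]
    omega
  have r1 : ∑ m ∈ Finset.range (n+1),
      (if i < m + 1 then
        (-1:ℝ) ^ m * (poch (α + β + 1 + m + 1) (n - m) / (n - m).factorial) *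
          (x^i * y^(m-i) * (m.choose i)) / m.factorial
      else 0)
      = ∑ j ∈ Finset.range (n-i+1),
        (-1:ℝ) ^ (i+j) * (poch (α + β + 1 + (i+j:ℕ) + 1) (n - (i+j)) / (n - (i+j)).factorial) *
          (x^i * y^((i+j)-i) * ((i+j).choose i)) / (i+j).factorial := by
    rw [← Finset.sum_filter]
    have hf : (Finset.range (n+1)).filter (fun m => i < m + 1) = Finset.Ico i (n+1) := by
      ext m
      simp only [Finset.mem_filter, Finset.mem_range, Finset.mem_Ico]
      omega
    rw [hf, Finset.sum_Ico_eq_sum_range]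
    have hc : n + 1 - i = (n - i) + 1 := by omega
    rw [hc]
  rw [l1, r1]
  refine Finset.sum_congr rfl fun j hj => ?_
  have hj' : i + j ≤ n := by
    have := Finset.mem_range.mp hj; omega
  have e1 : (i+j)-i = j := by omega
  have e2 : n - (i+j) = n - i - j := by omega
  have e3 : α + β + 1 + ((i+j:ℕ):ℝ) + 1 = (α+i) + (β+j) + 2 := by push_cast; ring
  rw [e1, e2, e3, pow_add]
  have hsym : (i+j).choose j = (i+j).choose i := by
    simpa [e1] using Nat.choose_symm (Nat.le_add_right i j)
  have hch : ((i+j).choose i : ℕ) * i.factorial * j.factorial = (i+j).factorial := by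
    rw [← hsym]; exact Nat.add_choose_mul_factorial_mul_factorial i j
  have hfi : (i.factorial : ℝ) ≠ 0 := by positivity
  have hfj : (j.factorial : ℝ) ≠ 0 := by positivity
  have hch' : (((i+j).choose i : ℕ) : ℝ) = ((i+j).factorial : ℝ) / ((i.factorial : ℝ) * (j.factorial : ℝ)) := by
    rw [eq_div_iff (by positivity), ← mul_assoc]
    exact_mod_cast congrArg (Nat.cast : ℕ → ℝ) hch
  rw [hch']
  have hfij : ((i+j).factorial : ℝ) ≠ 0 := by positivity
  field_simp
end
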